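/- Let n ≥ 2 and ε > 0. There exist constants 0 < c ≤ C, depending only on n and ε, such that for every 0 < a ≤ 2: c ≤ ∫_0^1 t^{n-1+ε}/(t² + a)^{n/2} dt ≤ C. -/

import Mathlib

open MeasureTheory intervalIntegral

private lemma aux_intble (p a q : ℝ) (hp : 0 < p) (ha : 0 < a) :
    IntervalIntegrable (fun t => t ^ p / (t ^ 2 + a) ^ q) volume 0 1 := by
  apply ContinuousOn.intervalIntegrable
  apply ContinuousOn.div
  · intro t _
    exact (Real.continuousAt_rpow_const t p (Or.inr hp.le)).continuousWithinAt
  · intro t _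
    exact (((continuous_pow 2).add continuous_const).continuousAt.rpow_const
      (Or.inl (by show t ^ 2 + a ≠ 0; positivity))).continuousWithinAt
  · intro t _; positivity

theorem stmt18 (n : ℕ) (hn : 2 ≤ n) (ε : ℝ) (hε : 0 < ε) :
    ∃ c C : ℝ, 0 < c ∧ c ≤ C ∧ ∀ a : ℝ, 0 < a → a ≤ 2 →
      (c ≤ ∫ t in (0 : ℝ)..1, t ^ ((n : ℝ) - 1 + ε) / (t ^ 2 + a) ^ ((n : ℝ) / 2)) ∧
      (∫ t in (0 : ℝ)..1, t ^ ((n : ℝ) - 1 + ε) / (t ^ 2 + a) ^ ((n : ℝ) / 2)) ≤ C := by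
  set p : ℝ := (n : ℝ) - 1 + ε with hpdef
  set q : ℝ := (n : ℝ) / 2 with hqdef
  have hn1 : (1:ℝ) ≤ (n:ℝ) := by exact_mod_cast Nat.one_le_of_lt hn
  have hp : 0 < p := by simp only [hpdef]; linarith
  have hq : 0 < q := by positivity
  have key : ∀ a : ℝ, 0 < a → a ≤ 2 →
      (1 / ((p + 1) * 3 ^ q) ≤ ∫ t in (0:ℝ)..1, t ^ p / (t ^ 2 + a) ^ q) ∧
      (∫ t in (0:ℝ)..1, t ^ p / (t ^ 2 + a) ^ q) ≤ 1 / ε := by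
    intro a ha ha2
    have hible := aux_intble p a q hp ha
    constructor
    · -- lower bound
      have h1 : (∫ t in (0:ℝ)..1, t ^ p / 3 ^ q) ≤ ∫ t in (0:ℝ)..1, t ^ p / (t ^ 2 + a) ^ q := by
        apply intervalIntegral.integral_mono_on (by norm_num) _ hible
        · intro t ht
          apply div_le_div_of_nonneg_left (Real.rpow_nonneg ht.1 p) (by positivity)
          apply Real.rpow_le_rpow (by positivity) _ hq.le
          nlinarith [ht.1, ht.2]
        · exact (intervalIntegrable_rpow' (by linarith)).div_const _
      have h2 : (∫ t in (0:ℝ)..1, t ^ p / 3 ^ q) = 1 / ((p + 1) * 3 ^ q) := by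
        rw [intervalIntegral.integral_div, integral_rpow (Or.inl (by linarith)),
          Real.one_rpow, Real.zero_rpow (by linarith), div_div]
        norm_num
      linarith
    · -- upper bound
      have h1 : (∫ t in (0:ℝ)..1, t ^ p / (t ^ 2 + a) ^ q) ≤ ∫ t in (0:ℝ)..1, t ^ (ε - 1) := by
        apply intervalIntegral.integral_mono_on (by norm_num) hible
          (intervalIntegrable_rpow' (by linarith))
        intro t ht
        rcases eq_or_lt_of_le ht.1 with h0 | h0
        · rw [← h0]
          rw [Real.zero_rpow hp.ne', zero_div]
          exact Real.rpow_nonneg le_rfl _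
        · have ht2 : (t ^ 2 : ℝ) ^ q = t ^ (2 * q) := by
            rw [← Real.rpow_natCast t 2, ← Real.rpow_mul h0.le]
            norm_num
          have h2q : 2 * q = (n : ℝ) := by rw [hqdef]; ring
          calc t ^ p / (t ^ 2 + a) ^ q ≤ t ^ p / (t ^ 2) ^ q := by
                apply div_le_div_of_nonneg_left (Real.rpow_nonneg ht.1 p) (by positivity)
                apply Real.rpow_le_rpow (by positivity) (by linarith) hq.le
            _ = t ^ (ε - 1) := by
                rw [ht2, ← Real.rpow_sub h0, h2q]
                congr 1
                rw [hpdef]; ring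
      have h2 : (∫ t in (0:ℝ)..1, t ^ (ε - 1)) = 1 / ε := by
        rw [integral_rpow (Or.inl (by linarith)), Real.one_rpow,
          Real.zero_rpow (by linarith)]
        norm_num
      linarith
  refine ⟨1 / ((p + 1) * 3 ^ q), 1 / ε, by positivity, ?_, key⟩
  exact le_trans (key 1 one_pos (by norm_num)).1 (key 1 one_pos (by norm_num)).2
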